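/- Let X be a real normed space and let f : X → ℝ be Fréchet continuously differentiable. Suppose that for all x, y ∈ X, ⟨∇f(x), y − x⟩ > 0 implies ⟨∇f(y), y − x⟩ ≥ 0. Then f is quasiconvex on X, i.e., for all x, y ∈ X and all λ ∈ (0,1), f(λx + (1−λ)y) ≤ max{f(x), f(y)}. -/
import Mathlib


/-- Quasimonotonicity of the gradient (condition (c)) implies quasiconvexity. -/
theorem quasimonotone_imp_quasiconvex {X : Type*} [NormedAddCommGroup X] [NormedSpace ℝ X]
    (f : X → ℝ) (f' : X → X →L[ℝ] ℝ)
    (hderiv : ∀ x, HasFDerivAt f (f' x) x) (hcont : Continuous f')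
    (hc : ∀ x y : X, 0 < f' x (y - x) → 0 ≤ f' y (y - x)) :
    ∀ x y : X, ∀ l : ℝ, l ∈ Set.Ioo (0 : ℝ) 1 →
      f (l • x + (1 - l) • y) ≤ max (f x) (f y) := by
  intro x y l hl
  by_contra hcon
  push_neg at hcon
  set v : X := y - x with hv
  set γ : ℝ → X := fun t => x + t • v with hγ
  set g : ℝ → ℝ := fun t => f (γ t) with hg
  set G : ℝ → ℝ := fun t => f' (γ t) v with hG
  have hd : ∀ t : ℝ, HasDerivAt g (G t) t := by
    intro t
    have hline : HasDerivAt (fun t : ℝ => x + t • v) v t := by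
      simpa using ((hasDerivAt_id t).smul_const v).const_add x
    exact (hderiv (γ t)).comp_hasDerivAt t hline
  have hgcont : Continuous g :=
    continuous_iff_continuousAt.mpr fun t => (hd t).continuousAt
  have hstep : ∀ s t : ℝ, s < t → 0 < G s → 0 ≤ G t := by
    intro s t hst hGs
    have hdiff : γ t - γ s = (t - s) • v := by
      simp only [hγ, sub_smul]
      abel
    have h1 : 0 < f' (γ s) (γ t - γ s) := by
      rw [hdiff, map_smul, smul_eq_mul]
      exact mul_pos (by linarith) hGs
    have h2 := hc (γ s) (γ t) h1
    rw [hdiff, map_smul, smul_eq_mul] at h2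
    nlinarith [h2]
  set m : ℝ := 1 - l with hm
  have hm0 : 0 < m := by simp only [hm]; linarith [hl.2]
  have hm1 : m < 1 := by simp only [hm]; linarith [hl.1]
  have hγ0 : γ 0 = x := by simp [hγ]
  have hγ1 : γ 1 = y := by simp [hγ, hv]
  have hγm : γ m = l • x + m • y := by
    simp only [hγ, hv, hm, smul_sub]
    module
  have hgm : max (g 0) (g 1) < g m := by
    simpa [hg, hγ0, hγ1, hγm] using hcon
  obtain ⟨s, hs, hGs⟩ := exists_hasDerivAt_eq_slope g G hm0 hgcont.continuousOn
    (fun u _ => hd u)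
  have hGspos : 0 < G s := by
    rw [hGs, sub_zero]
    have h0 : g 0 < g m := lt_of_le_of_lt (le_max_left _ _) hgm
    exact div_pos (by linarith) hm0
  obtain ⟨t, ht, hGt⟩ := exists_hasDerivAt_eq_slope g G hm1 hgcont.continuousOn
    (fun u _ => hd u)
  have hGtnn : 0 ≤ G t := hstep s t (lt_trans hs.2 ht.1) hGspos
  have h1m : 0 < 1 - m := by linarith
  have h1 : g m ≤ g 1 := by
    rw [hGt] at hGtnn
    rcases div_nonneg_iff.mp hGtnn with ⟨h, _⟩ | ⟨_, h⟩
    · linarith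
    · linarith
  have h2 : g 1 < g m := lt_of_le_of_lt (le_max_right _ _) hgm
  linarith
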